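/- For n ≡ 0 (mod 4), the honeycomb toroidal graph HTG(2, n, n/2) is isomorphic to the generalized Petersen graph GP(n, n/2 - 1). -/

import Mathlib

open SimpleGraph Finset

/-- A `k`-rainbow dominating function on a graph `G`: whenever `f v = ∅`,
every color appears on some neighbor of `v`. -/
def IsKRDF {V : Type*} (G : SimpleGraph V) (k : ℕ) (f : V → Finset (Fin k)) : Prop :=
  ∀ v, f v = ∅ → ∀ c : Fin k, ∃ u, G.Adj v u ∧ c ∈ f u

/-- The weight of a rainbow dominating function. -/
def rdfWeight {V : Type*} [Fintype V] {k : ℕ} (f : V → Finset (Fin k)) : ℕ :=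
  ∑ v, (f v).card

/-- The `k`-rainbow domination number of `G`. -/
noncomputable def rainbowDomNum {V : Type*} [Fintype V] (G : SimpleGraph V) (k : ℕ) : ℕ :=
  sInf {w | ∃ f, IsKRDF G k f ∧ rdfWeight f = w}

/-- One-directional adjacency relation of the honeycomb toroidal graph
`HTG(m,n,ℓ)`: vertical edges, horizontal edges and jumps. -/
def HTGRel (m n ℓ : ℕ) [NeZero m] [NeZero n]
    (x y : ZMod m × ZMod n) : Prop :=
  (y.1 = x.1 ∧ y.2 = x.2 + 1) ∨
  (x.1.val < m - 1 ∧ y.1 = x.1 + 1 ∧ y.2 = x.2 ∧ (x.1.val + 1) % 2 = x.2.val % 2) ∨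
  (x.1.val = m - 1 ∧ y.1 = 0 ∧ y.2 = x.2 + (ℓ : ZMod n) ∧ x.2.val % 2 = m % 2)

/-- The honeycomb toroidal graph `HTG(m,n,ℓ)` on vertex set `ZMod m × ZMod n`. -/
def HTG (m n ℓ : ℕ) [NeZero m] [NeZero n] : SimpleGraph (ZMod m × ZMod n) where
  Adj x y := x ≠ y ∧ (HTGRel m n ℓ x y ∨ HTGRel m n ℓ y x)
  symm := by constructor; rintro x y ⟨hne, h⟩; exact ⟨hne.symm, h.symm⟩
  loopless := by constructor; rintro x ⟨hne, -⟩; exact hne rfl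

/-- The generalized Petersen graph `GP(n,k)`: outer vertices `Sum.inl i`, inner
vertices `Sum.inr i`, with outer edges, spokes and inner edges. -/
def GP (n k : ℕ) : SimpleGraph (ZMod n ⊕ ZMod n) where
  Adj x y := x ≠ y ∧
    (match x, y with
     | Sum.inl i, Sum.inl j => j = i + 1 ∨ i = j + 1
     | Sum.inl i, Sum.inr j => i = j
     | Sum.inr i, Sum.inl j => i = j
     | Sum.inr i, Sum.inr j => j = i + (k : ZMod n) ∨ i = j + (k : ZMod n))
  symm := by
    constructor; rintro (i | i) (j | j) ⟨hne, h⟩ <;>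
      refine ⟨hne.symm, ?_⟩ <;> simp only at h ⊢ <;> tauto
  loopless := by constructor; rintro (i | i) ⟨hne, -⟩ <;> exact hne rfl


def gg (n : ℕ) (j : ZMod n) : ZMod n := j + ((n / 2 : ℕ) : ZMod n) * (j + 1)

section aux
variable (n : ℕ) (hn : n % 4 = 0)

lemma h_add_h (hn : n % 4 = 0) : ((n / 2 : ℕ) : ZMod n) + ((n / 2 : ℕ) : ZMod n) = 0 := by
  have : ((n / 2 : ℕ) : ZMod n) + ((n / 2 : ℕ) : ZMod n) = ((n / 2 + n / 2 : ℕ) : ZMod n) := by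
    push_cast; ring
  rw [this, show n / 2 + n / 2 = n by omega, ZMod.natCast_self]

lemma h_sq (hn : n % 4 = 0) : ((n / 2 : ℕ) : ZMod n) * ((n / 2 : ℕ) : ZMod n) = 0 := by
  have : ((n / 2 : ℕ) : ZMod n) * ((n / 2 : ℕ) : ZMod n) = ((n / 2 * (n / 2) : ℕ) : ZMod n) := by
    push_cast; ring
  rw [this, show n / 2 * (n / 2) = n * (n / 4) by
    obtain ⟨t, rfl⟩ : ∃ t, n = 4 * t := ⟨n / 4, by omega⟩
    rw [show 4 * t / 2 = 2 * t by omega, show 4 * t / 4 = t by omega]; ring]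
  simp

lemma gg_gg (hn : n % 4 = 0) (j : ZMod n) : gg n (gg n j) = j := by
  have h2 := h_add_h n hn
  have hs := h_sq n hn
  unfold gg
  linear_combination (j + 1) * h2 + (j + 1) * hs

lemma gg_inj (hn : n % 4 = 0) : Function.Injective (gg n) := by
  intro a b hab
  have := congrArg (gg n) hab
  rwa [gg_gg n hn, gg_gg n hn] at this

lemma gg_add_one (hn : n % 4 = 0) (j : ZMod n) :
    gg n (j + 1) = gg n j + (1 - ((n / 2 : ℕ) : ZMod n)) := by
  have h2 := h_add_h n hn
  unfold gg
  linear_combination h2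

lemma hmul (hn : n % 4 = 0) [NeZero n] (j : ZMod n) :
    ((n / 2 : ℕ) : ZMod n) * j
      = if j.val % 2 = 0 then 0 else ((n / 2 : ℕ) : ZMod n) := by
  have h2 : ((n / 2 : ℕ) : ZMod n) * 2 = 0 := by
    linear_combination h_add_h n hn
  have key : ∀ k : ℕ, ((n / 2 : ℕ) : ZMod n) * (k : ZMod n)
      = if k % 2 = 0 then 0 else ((n / 2 : ℕ) : ZMod n) := by
    intro k
    have hk : (k : ZMod n) = 2 * ((k / 2 : ℕ) : ZMod n) + ((k % 2 : ℕ) : ZMod n) := by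
      rw [show ((2:ZMod n) * ((k / 2 : ℕ) : ZMod n) = ((2 * (k/2) : ℕ) : ZMod n)) by push_cast; ring,
        ← Nat.cast_add, show 2 * (k / 2) + k % 2 = k by omega]
    rw [hk, mul_add, show ((n / 2 : ℕ) : ZMod n) * (2 * ((k / 2 : ℕ) : ZMod n))
      = (((n / 2 : ℕ) : ZMod n) * 2) * ((k / 2 : ℕ) : ZMod n) by ring, h2, zero_mul, zero_add]
    rcases Nat.mod_two_eq_zero_or_one k with h | h <;> simp [h]
  have hv : ((j.val : ℕ) : ZMod n) = j := ZMod.natCast_rightInverse j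
  calc ((n / 2 : ℕ) : ZMod n) * j = ((n / 2 : ℕ) : ZMod n) * ((j.val : ℕ) : ZMod n) := by rw [hv]
    _ = _ := key j.val

end aux

lemma HTG_adj (m n ℓ : ℕ) [NeZero m] [NeZero n] (x y : ZMod m × ZMod n) :
    (HTG m n ℓ).Adj x y ↔ x ≠ y ∧ (HTGRel m n ℓ x y ∨ HTGRel m n ℓ y x) := Iff.rfl

lemma GP_adj (n k : ℕ) (x y : ZMod n ⊕ ZMod n) :
    (GP n k).Adj x y ↔ x ≠ y ∧
    (match x, y with
     | Sum.inl i, Sum.inl j => j = i + 1 ∨ i = j + 1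
     | Sum.inl i, Sum.inr j => i = j
     | Sum.inr i, Sum.inl j => i = j
     | Sum.inr i, Sum.inr j => j = i + (k : ZMod n) ∨ i = j + (k : ZMod n)) := Iff.rfl
/-- For `n ≡ 0 (mod 4)` (`n ≥ 4`), the honeycomb toroidal graph `HTG(2, n, n/2)` is
isomorphic to the generalized Petersen graph `GP(n, n/2 - 1)`. -/
theorem HTG2_iso_GP (n : ℕ) [NeZero n] (hn4 : 4 ≤ n) (hn : n % 4 = 0) :
    Nonempty (HTG 2 n (n / 2) ≃g GP n (n / 2 - 1)) := by
  have zmod2 : ∀ z : ZMod 2, z = 0 ∨ z = 1 := by decide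
  have hk : ((n / 2 - 1 : ℕ) : ZMod n) = ((n / 2 : ℕ) : ZMod n) - 1 := by
    rw [show n / 2 - 1 = n / 2 - 1 from rfl, Nat.cast_sub (by omega)]; simp
  have h2 := h_add_h n hn
  have hgadd : ∀ j : ZMod n, gg n j + (1 - ((n / 2 : ℕ) : ZMod n)) = gg n (j + 1) :=
    fun j => (gg_add_one n hn j).symm
  have hsub : (((n / 2 : ℕ) : ZMod n) - 1) = -(1 - ((n / 2 : ℕ) : ZMod n)) := by ring
  -- translate inner-edge conditions
  have inner : ∀ a b : ZMod n,
      (gg n b = gg n a + ((n / 2 - 1 : ℕ) : ZMod n) ∨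
       gg n a = gg n b + ((n / 2 - 1 : ℕ) : ZMod n)) ↔ (b = a + 1 ∨ a = b + 1) := by
    intro a b
    rw [hk]
    constructor
    · rintro (h | h)
      · right
        have : gg n a = gg n b + (1 - ((n / 2 : ℕ) : ZMod n)) := by
          rw [h, hsub]; ring
        rw [hgadd] at this
        exact gg_inj n hn this
      · left
        have : gg n b = gg n a + (1 - ((n / 2 : ℕ) : ZMod n)) := by
          rw [h, hsub]; ring
        rw [hgadd] at this
        exact gg_inj n hn this
    · rintro (rfl | rfl)
      · right; rw [← hgadd, hsub]; ring
      · left; rw [← hgadd, hsub]; ring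
  have ggeq : ∀ a b : ZMod n, a = gg n b ↔
      ((b.val % 2 = 1 ∧ a = b) ∨ (a = b + ((n / 2 : ℕ) : ZMod n) ∧ b.val % 2 = 0)) := by
    intro a b
    unfold gg
    rw [mul_add, mul_one, hmul n hn b]
    rcases Nat.mod_two_eq_zero_or_one b.val with hb | hb
    · rw [if_pos hb]
      constructor
      · intro h; exact Or.inr ⟨by rw [h]; ring, hb⟩
      · rintro (⟨h1, rfl⟩ | ⟨h1, -⟩)
        · omega
        · rw [h1]; ring
    · rw [if_neg (by omega)]
      constructor
      · intro h; exact Or.inl ⟨hb, by rw [h]; linear_combination h2⟩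
      · rintro (⟨-, rfl⟩ | ⟨h1, h0⟩)
        · linear_combination -h2
        · omega
  refine ⟨{ toFun := fun x => if x.1 = 0 then .inl x.2 else .inr (gg n x.2),
            invFun := fun s => Sum.elim (fun a => ((0 : ZMod 2), a))
              (fun a => ((1 : ZMod 2), gg n a)) s,
            left_inv := ?_, right_inv := ?_, map_rel_iff' := ?_ }⟩
  · rintro ⟨i, a⟩
    rcases zmod2 i with rfl | rfl
    · simp
    · simp [show (1 : ZMod 2) ≠ 0 by decide, gg_gg n hn]
  · rintro (a | a)
    · simp
    · simp [show (1 : ZMod 2) ≠ 0 by decide, gg_gg n hn]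
  · rintro ⟨i, a⟩ ⟨j, b⟩
    rcases zmod2 i with rfl | rfl <;> rcases zmod2 j with rfl | rfl <;>
      simp only [Equiv.coe_fn_mk] <;>
      simp [GP_adj, HTG_adj, HTGRel, show (1 : ZMod 2) ≠ 0 by decide,
        show ((0 : ZMod 2)).val = 0 from rfl, show ((1 : ZMod 2)).val = 1 from rfl,
        show (0 : ZMod 2) + 1 = 1 by decide, show ¬((1 : ZMod 2) = 0) by decide,
        show ¬((0 : ZMod 2) = 1) by decide]
    · -- outer-inner
      rw [ggeq a b]
      constructor
      · rintro (⟨h1, rfl⟩ | h)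
        exacts [Or.inl ⟨rfl, h1.symm⟩, Or.inr h]
      · rintro (⟨rfl, h1⟩ | h)
        exacts [Or.inl ⟨h1.symm, rfl⟩, Or.inr h]
    · -- inner-outer
      rw [show (gg n a = b) ↔ (b = gg n a) from eq_comm, ggeq b a]
      constructor
      · rintro (⟨h1, rfl⟩ | h)
        exacts [Or.inr ⟨rfl, h1.symm⟩, Or.inl h]
      · rintro (h | ⟨rfl, h1⟩)
        exacts [Or.inr h, Or.inl ⟨h1.symm, rfl⟩]
    · -- inner-inner
      rw [inner a b]
      constructor
      · rintro ⟨h1, hrel⟩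
        exact ⟨fun e => h1 (by rw [e]), hrel⟩
      · rintro ⟨h1, hrel⟩
        exact ⟨fun e => h1 (gg_inj n hn e), hrel⟩
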